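/- arXiv:1502.04551 — 9 statements merged into one kernel-verified Lean document; each statement's English description precedes it below -/
import Mathlib

section
/- If a sequence b of length n is bitonic and y = split(b) (where split compares positions i and n/2+i for i=1..n/2, placing the max at i and min at n/2+i), then left(y) and right(y) are bitonic and every element of left(y) is greater than or equal to every element of right(y). -/
lemma adj_incr (f : ℕ → ℕ) (a b : ℕ)
    (h : ∀ p, a ≤ p → p + 1 ≤ b → f p ≤ f (p + 1)) :
    ∀ p q, a ≤ p → p ≤ q → q ≤ b → f p ≤ f q := by
  intro p q hp hpq hqb
  have H : ∀ n, p ≤ n → n ≤ b → f p ≤ f n := by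
    intro n
    induction n with
    | zero => intro h1 _; have hz : p = 0 := (by omega); subst hz; exact le_refl _
    | succ n ih =>
      intro h1 h2
      rcases Nat.lt_or_ge p (n+1) with hlt | hge
      · exact le_trans (ih (by omega) (by omega)) (h n (by omega) (by omega))
      · have : p = n + 1 := by omega
        rw [this]
  exact H q hpq hqb

lemma adj_decr (f : ℕ → ℕ) (a b : ℕ)
    (h : ∀ p, a ≤ p → p + 1 ≤ b → f (p + 1) ≤ f p) :
    ∀ p q, a ≤ p → p ≤ q → q ≤ b → f q ≤ f p := by
  intro p q hp hpq hqb
  have H : ∀ n, p ≤ n → n ≤ b → f n ≤ f p := by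
    intro n
    induction n with
    | zero => intro h1 _; have hz : p = 0 := (by omega); subst hz; exact le_refl _
    | succ n ih =>
      intro h1 h2
      rcases Nat.lt_or_ge p (n+1) with hlt | hge
      · exact le_trans (h n (by omega) (by omega)) (ih (by omega) (by omega))
      · have : p = n + 1 := by omega
        rw [this]
  exact H q hpq hqb

lemma mod_small (a m : ℕ) (h : a < m) : a % m = a := Nat.mod_eq_of_lt h

lemma mod_mid (a m : ℕ) (h1 : m ≤ a) (h2 : a < 2*m) : a % m = a - m := by
  rw [Nat.mod_eq_sub_mod h1, Nat.mod_eq_of_lt (by omega)]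

lemma pair_mod (m t : ℕ) (hm : 1 ≤ m) :
    (t % (2*m) = t % m ∧ (t+m) % (2*m) = t % m + m) ∨
    (t % (2*m) = t % m + m ∧ (t+m) % (2*m) = t % m) := by
  have h2 : t % (2*m) % m = t % m := Nat.mod_mul_left_mod t 2 m
  have hu : t % (2*m) < 2*m := Nat.mod_lt _ (by omega)
  have hmm : m % (2*m) = m := Nat.mod_eq_of_lt (by omega)
  have hadd : (t+m) % (2*m) = (t % (2*m) + m) % (2*m) := by
    conv_lhs => rw [Nat.add_mod, hmm]
  rcases Nat.lt_or_ge (t % (2*m)) m with hlt | hge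
  · left
    have e1 : t % (2*m) = t % m := by rw [← h2, Nat.mod_eq_of_lt hlt]
    refine ⟨e1, ?_⟩
    rw [hadd, e1, Nat.mod_eq_of_lt (by have := Nat.mod_lt t (show 0 < m by omega); omega)]
  · right
    have e0 : t % (2*m) % m = t % (2*m) - m := mod_mid _ _ hge hu
    have e1 : t % (2*m) = t % m + m := by omega
    refine ⟨e1, ?_⟩
    rw [hadd, e1, mod_mid _ _ (by omega) (by have := Nat.mod_lt t (show 0 < m by omega); omega)]
    have := Nat.mod_lt t (show 0 < m by omega)
    omega

lemma inv_rot (m r : ℕ) (hm : 1 ≤ m) :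
    ∀ i, 1 ≤ i → i ≤ m → ∃ p, 1 ≤ p ∧ p ≤ m ∧ (p - 1 + r) % m + 1 = i := by
  intro i h1 h2
  refine ⟨(i - 1 + (m - r % m)) % m + 1, Nat.succ_le_succ (Nat.zero_le _),
    Nat.succ_le_of_lt (Nat.mod_lt _ (by omega)), ?_⟩
  have hdm : m * (r / m) + r % m = r := Nat.div_add_mod r m
  have hrm : r % m < m := Nat.mod_lt _ (by omega)
  rw [Nat.add_sub_cancel, Nat.mod_add_mod]
  rw [show i - 1 + (m - r % m) + r = i - 1 + m + m * (r / m) by omega]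
  rw [Nat.add_mul_mod_self_left, Nat.add_mod_right, Nat.mod_eq_of_lt (by omega)]
  omega

lemma uni_gap (m a : ℕ) (f : ℕ → ℕ) (hm : 1 ≤ m) (ha : a ≤ m) (h0 : f 0 = f 1)
    (h1 : ∀ p, 1 ≤ p → p + 1 ≤ a → f p ≤ f (p + 1))
    (h2 : ∀ p, a + 1 ≤ p → p + 1 ≤ m → f (p + 1) ≤ f p) :
    ∃ j, j ≤ m ∧ (∀ p q, 1 ≤ p → p ≤ q → q ≤ j → f p ≤ f q) ∧
      (∀ p q, j ≤ p → p ≤ q → q ≤ m → f q ≤ f p) := by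
  rcases Nat.lt_or_ge a m with ham | ham
  · rcases le_or_gt (f a) (f (a+1)) with hc | hc
    · refine ⟨a+1, by omega, ?_, ?_⟩
      · refine adj_incr f 1 (a+1) ?_
        intro p hp hpb
        rcases Nat.lt_or_ge p a with hpa | hpa
        · exact h1 p hp (by omega)
        · have : p = a := by omega
          rwa [this]
      · exact adj_decr f (a+1) m h2
    · have ha1 : 1 ≤ a := by
        by_contra hcon
        have : a = 0 := by omega
        rw [this, h0] at hc
        exact absurd hc (lt_irrefl _)
      refine ⟨a, by omega, adj_incr f 1 a h1, ?_⟩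
      refine adj_decr f a m ?_
      intro p hp hpb
      rcases Nat.lt_or_ge p (a+1) with hpa | hpa
      · have : p = a := by omega
        rw [this]; exact hc.le
      · exact h2 p hpa hpb
  · refine ⟨m, le_refl m, adj_incr f 1 m (fun p hp hpb => h1 p hp (by omega)), ?_⟩
    intro p q hp hpq hq
    have : p = q := by omega
    rw [this]


lemma coreCross (m : ℕ) (hm : 1 ≤ m) (c : ℕ → ℕ) (i : ℕ) (hi : i ≤ 2*m)
    (hinc : ∀ p q, 1 ≤ p → p ≤ q → q ≤ i → c p ≤ c q)
    (hdec : ∀ p q, i ≤ p → p ≤ q → q ≤ 2*m → c q ≤ c p) :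
    ∀ p q, 1 ≤ p → p ≤ m → 1 ≤ q → q ≤ m →
      min (c q) (c (q+m)) ≤ max (c p) (c (p+m)) := by
  intro p q hp1 hp2 hq1 hq2
  rcases le_or_gt p q with hpq | hpq
  · rcases le_or_gt i (p+m) with hip | hip
    · exact le_trans (min_le_right _ _)
        (le_trans (hdec (p+m) (q+m) hip (by omega) (by omega)) (le_max_right _ _))
    · exact le_trans (min_le_left _ _)
        (le_trans (hinc q (p+m) hq1 (by omega) (by omega)) (le_max_right _ _))
  · rcases le_or_gt p i with hip | hip
    · exact le_trans (min_le_left _ _)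
        (le_trans (hinc q p hq1 (by omega) hip) (le_max_left _ _))
    · exact le_trans (min_le_right _ _)
        (le_trans (hdec p (q+m) (by omega) (by omega) (by omega)) (le_max_left _ _))

lemma transfer_rot0 (m : ℕ) (hm : 1 ≤ m) (g : ℕ → ℕ) (a : ℕ) (ha : a ≤ m)
    (H1 : ∀ p, 1 ≤ p → p + 1 ≤ a → g p ≤ g (p + 1))
    (H2 : ∀ p, a + 1 ≤ p → p + 1 ≤ m → g (p + 1) ≤ g p) :
    ∃ j, j ≤ m ∧
      (∀ p q, 1 ≤ p → p ≤ q → q ≤ j → g ((p - 1 + 0) % m + 1) ≤ g ((q - 1 + 0) % m + 1)) ∧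
      (∀ p q, j ≤ p → p ≤ q → q ≤ m → g ((q - 1 + 0) % m + 1) ≤ g ((p - 1 + 0) % m + 1)) := by
  have hpos : ∀ p, 1 ≤ p → p ≤ m → (p - 1 + 0) % m + 1 = p := by
    intro p h1 h2
    rw [Nat.add_zero, Nat.mod_eq_of_lt (by omega)]
    omega
  obtain ⟨j, hj, G1, G2⟩ := uni_gap m a (fun p => g ((p - 1 + 0) % m + 1)) hm ha rfl
    (fun p hp hpb => by
      show g ((p - 1 + 0) % m + 1) ≤ g ((p + 1 - 1 + 0) % m + 1)
      rw [hpos p hp (by omega), hpos (p+1) (by omega) (by omega)]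
      exact H1 p hp hpb)
    (fun p hp hpb => by
      show g ((p + 1 - 1 + 0) % m + 1) ≤ g ((p - 1 + 0) % m + 1)
      rw [hpos p (by omega) (by omega), hpos (p+1) (by omega) (by omega)]
      exact H2 p hp hpb)
  exact ⟨j, hj, G1, G2⟩

lemma coreMin (m : ℕ) (hm : 1 ≤ m) (c : ℕ → ℕ) (i : ℕ) (hi : i ≤ 2*m)
    (hinc : ∀ p q, 1 ≤ p → p ≤ q → q ≤ i → c p ≤ c q)
    (hdec : ∀ p q, i ≤ p → p ≤ q → q ≤ 2*m → c q ≤ c p) :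
    ∃ s j, j ≤ m ∧
      (∀ p q, 1 ≤ p → p ≤ q → q ≤ j →
        min (c ((p-1+s) % m + 1)) (c ((p-1+s) % m + 1 + m)) ≤
          min (c ((q-1+s) % m + 1)) (c ((q-1+s) % m + 1 + m))) ∧
      (∀ p q, j ≤ p → p ≤ q → q ≤ m →
        min (c ((q-1+s) % m + 1)) (c ((q-1+s) % m + 1 + m)) ≤
          min (c ((p-1+s) % m + 1)) (c ((p-1+s) % m + 1 + m))) := by
  refine ⟨0, ?_⟩
  have main : ∃ a, a ≤ m ∧
      (∀ p, 1 ≤ p → p + 1 ≤ a → min (c p) (c (p+m)) ≤ min (c (p+1)) (c (p+1+m))) ∧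
      (∀ p, a + 1 ≤ p → p + 1 ≤ m → min (c (p+1)) (c (p+1+m)) ≤ min (c p) (c (p+m))) := by
    rcases le_or_gt i m with hA | hB
    · by_cases hex : ∃ p, 1 ≤ p ∧ p ≤ i ∧ c (p+m) ≤ c p
      · set k := Nat.find hex with hkdef
        obtain ⟨hk1, hk2, hk3⟩ : 1 ≤ k ∧ k ≤ i ∧ c (k+m) ≤ c k := Nat.find_spec hex
        have hlow : ∀ p, 1 ≤ p → p < k → c p < c (p+m) := by
          intro p h1 h2
          have := Nat.find_min hex h2
          push_neg at this
          exact this h1 (by omega)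
        have hcross : ∀ p, k ≤ p → p ≤ i → c (p+m) ≤ c p := by
          intro p h1 h2
          calc c (p+m) ≤ c (k+m) := hdec (k+m) (p+m) (by omega) (by omega) (by omega)
            _ ≤ c k := hk3
            _ ≤ c p := hinc k p hk1 h1 h2
        refine ⟨k - 1, by omega, ?_, ?_⟩
        · intro p hp hpb
          rw [min_eq_left (hlow p hp (by omega)).le,
              min_eq_left (hlow (p+1) (by omega) (by omega)).le]
          exact hinc p (p+1) hp (by omega) (by omega)
        · intro p hp hpb
          rcases le_or_gt (p+1) i with hpi | hpi
          · rw [min_eq_right (hcross p (by omega) (by omega)),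
                min_eq_right (hcross (p+1) (by omega) hpi)]
            exact hdec (p+m) (p+1+m) (by omega) (by omega) (by omega)
          · exact min_le_min (hdec p (p+1) (by omega) (by omega) (by omega))
              (hdec (p+m) (p+1+m) (by omega) (by omega) (by omega))
      · push_neg at hex
        refine ⟨i, hA, ?_, ?_⟩
        · intro p hp hpb
          rw [min_eq_left (hex p hp (by omega)).le,
              min_eq_left (hex (p+1) (by omega) (by omega)).le]
          exact hinc p (p+1) hp (by omega) (by omega)
        · intro p hp hpb
          exact min_le_min (hdec p (p+1) (by omega) (by omega) (by omega))
            (hdec (p+m) (p+1+m) (by omega) (by omega) (by omega))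
    · by_cases hex : ∃ p, i - m ≤ p ∧ p ≤ m ∧ c (p+m) ≤ c p
      · set k := Nat.find hex with hkdef
        obtain ⟨hk1, hk2, hk3⟩ : i - m ≤ k ∧ k ≤ m ∧ c (k+m) ≤ c k := Nat.find_spec hex
        have hlow : ∀ p, i - m ≤ p → p < k → c p < c (p+m) := by
          intro p h1 h2
          have := Nat.find_min hex h2
          push_neg at this
          exact this h1 (by omega)
        have hcross : ∀ p, k ≤ p → p ≤ m → c (p+m) ≤ c p := by
          intro p h1 h2
          calc c (p+m) ≤ c (k+m) := hdec (k+m) (p+m) (by omega) (by omega) (by omega)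
            _ ≤ c k := hk3
            _ ≤ c p := hinc k p (by omega) h1 (by omega)
        refine ⟨k - 1, by omega, ?_, ?_⟩
        · intro p hp hpb
          rcases le_or_gt (p+1) (i - m) with hpj | hpj
          · exact min_le_min (hinc p (p+1) hp (by omega) (by omega))
              (hinc (p+m) (p+1+m) (by omega) (by omega) (by omega))
          · rw [min_eq_left (hlow p (by omega) (by omega)).le,
                min_eq_left (hlow (p+1) (by omega) (by omega)).le]
            exact hinc p (p+1) hp (by omega) (by omega)
        · intro p hp hpb
          rw [min_eq_right (hcross p (by omega) (by omega)),
              min_eq_right (hcross (p+1) (by omega) (by omega))]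
          exact hdec (p+m) (p+1+m) (by omega) (by omega) (by omega)
      · push_neg at hex
        refine ⟨m, le_refl m, ?_, ?_⟩
        · intro p hp hpb
          rcases le_or_gt (p+1) (i - m) with hpj | hpj
          · exact min_le_min (hinc p (p+1) hp (by omega) (by omega))
              (hinc (p+m) (p+1+m) (by omega) (by omega) (by omega))
          · rw [min_eq_left (hex p (by omega) (by omega)).le,
                min_eq_left (hex (p+1) (by omega) (by omega)).le]
            exact hinc p (p+1) hp (by omega) (by omega)
        · intro p hp hpb
          omega
  obtain ⟨a, ha, H1, H2⟩ := main
  exact transfer_rot0 m hm (fun p => min (c p) (c (p+m))) a ha H1 H2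

lemma coreMax (m : ℕ) (hm : 1 ≤ m) (c : ℕ → ℕ) (i : ℕ) (hi : i ≤ 2*m)
    (hinc : ∀ p q, 1 ≤ p → p ≤ q → q ≤ i → c p ≤ c q)
    (hdec : ∀ p q, i ≤ p → p ≤ q → q ≤ 2*m → c q ≤ c p) :
    ∃ s j, j ≤ m ∧
      (∀ p q, 1 ≤ p → p ≤ q → q ≤ j →
        max (c ((p-1+s) % m + 1)) (c ((p-1+s) % m + 1 + m)) ≤
          max (c ((q-1+s) % m + 1)) (c ((q-1+s) % m + 1 + m))) ∧
      (∀ p q, j ≤ p → p ≤ q → q ≤ m →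
        max (c ((q-1+s) % m + 1)) (c ((q-1+s) % m + 1 + m)) ≤
          max (c ((p-1+s) % m + 1)) (c ((p-1+s) % m + 1 + m))) := by
  have hpos : ∀ p, 1 ≤ p → p ≤ m → (p - 1 + 0) % m + 1 = p := by
    intro p h1 h2
    rw [Nat.add_zero, Nat.mod_eq_of_lt (by omega)]
    omega
  rcases le_or_gt i m with hA | hB
  · by_cases hex : ∃ p, 1 ≤ p ∧ p ≤ i ∧ c (p+m) ≤ c p
    · set k := Nat.find hex with hkdef
      obtain ⟨hk1, hk2, hk3⟩ : 1 ≤ k ∧ k ≤ i ∧ c (k+m) ≤ c k := Nat.find_spec hex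
      have hlow : ∀ p, 1 ≤ p → p < k → c p < c (p+m) := by
        intro p h1 h2
        have := Nat.find_min hex h2
        push_neg at this
        exact this h1 (by omega)
      have hcross : ∀ p, k ≤ p → p ≤ i → c (p+m) ≤ c p := by
        intro p h1 h2
        calc c (p+m) ≤ c (k+m) := hdec (k+m) (p+m) (by omega) (by omega) (by omega)
          _ ≤ c k := hk3
          _ ≤ c p := hinc k p hk1 h1 h2
      have hs1 : ∀ p, 1 ≤ p → p + k ≤ m + 1 → (p - 1 + (k-1)) % m + 1 = p + k - 1 := by
        intro p h1 h2
        rw [show p - 1 + (k-1) = p + k - 2 by omega, Nat.mod_eq_of_lt (by omega)]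
        omega
      have hs2 : ∀ p, m + 2 ≤ p + k → p ≤ m → (p - 1 + (k-1)) % m + 1 = p + k - 1 - m := by
        intro p h1 h2
        rw [show p - 1 + (k-1) = p + k - 2 by omega, mod_mid _ _ (by omega) (by omega)]
        omega
      refine ⟨k - 1, i - k + 1, by omega, ?_, ?_⟩
      · refine adj_incr (fun p => max (c ((p-1+(k-1)) % m + 1)) (c ((p-1+(k-1)) % m + 1 + m)))
          1 (i - k + 1) ?_
        intro p hp hpb
        show max (c ((p-1+(k-1)) % m + 1)) (c ((p-1+(k-1)) % m + 1 + m)) ≤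
          max (c ((p+1-1+(k-1)) % m + 1)) (c ((p+1-1+(k-1)) % m + 1 + m))
        rw [hs1 p hp (by omega), hs1 (p+1) (by omega) (by omega)]
        rw [max_eq_left (hcross (p+k-1) (by omega) (by omega)),
            max_eq_left (hcross (p+1+k-1) (by omega) (by omega))]
        exact hinc (p+k-1) (p+1+k-1) (by omega) (by omega) (by omega)
      · refine adj_decr (fun p => max (c ((p-1+(k-1)) % m + 1)) (c ((p-1+(k-1)) % m + 1 + m)))
          (i - k + 1) m ?_
        intro p hp hpb
        show max (c ((p+1-1+(k-1)) % m + 1)) (c ((p+1-1+(k-1)) % m + 1 + m)) ≤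
          max (c ((p-1+(k-1)) % m + 1)) (c ((p-1+(k-1)) % m + 1 + m))
        rcases lt_trichotomy (p+k) (m+1) with hc1 | hc1 | hc1
        · rw [hs1 p (by omega) (by omega), hs1 (p+1) (by omega) (by omega)]
          exact max_le_max (hdec (p+k-1) (p+1+k-1) (by omega) (by omega) (by omega))
            (hdec (p+k-1+m) (p+1+k-1+m) (by omega) (by omega) (by omega))
        · rw [hs1 p (by omega) (by omega)]
          rw [show p+1-1+(k-1) = m by omega, Nat.mod_self, Nat.zero_add]
          rw [show p+k-1 = m by omega]
          have hk2' : 2 ≤ k := by omega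
          rw [max_eq_right (hlow 1 (by omega) (by omega)).le]
          exact le_trans (hdec m (1+m) hA (by omega) (by omega)) (le_max_left _ _)
        · rw [hs2 p (by omega) (by omega), hs2 (p+1) (by omega) (by omega)]
          rw [max_eq_right (hlow (p+k-1-m) (by omega) (by omega)).le,
              max_eq_right (hlow (p+1+k-1-m) (by omega) (by omega)).le]
          exact hdec (p+k-1-m+m) (p+1+k-1-m+m) (by omega) (by omega) (by omega)
    · push_neg at hex
      refine ⟨0, 1, by omega, ?_, ?_⟩
      · intro p q h1 h2 h3
        have : p = q := by omega
        rw [this]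
      · refine adj_decr (fun p => max (c ((p-1+0) % m + 1)) (c ((p-1+0) % m + 1 + m))) 1 m ?_
        intro p hp hpb
        show max (c ((p+1-1+0) % m + 1)) (c ((p+1-1+0) % m + 1 + m)) ≤
          max (c ((p-1+0) % m + 1)) (c ((p-1+0) % m + 1 + m))
        rw [hpos p (by omega) (by omega), hpos (p+1) (by omega) (by omega)]
        rcases le_or_gt (p+1) i with hpi | hpi
        · rw [max_eq_right (hex (p+1) (by omega) hpi).le]
          exact le_trans (hdec (p+m) (p+1+m) (by omega) (by omega) (by omega)) (le_max_right _ _)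
        · exact max_le_max (hdec p (p+1) (by omega) (by omega) (by omega))
            (hdec (p+m) (p+1+m) (by omega) (by omega) (by omega))
  · by_cases hex : ∃ p, i - m ≤ p ∧ p ≤ m ∧ c (p+m) ≤ c p
    · set k := Nat.find hex with hkdef
      obtain ⟨hk1, hk2, hk3⟩ : i - m ≤ k ∧ k ≤ m ∧ c (k+m) ≤ c k := Nat.find_spec hex
      have hlow : ∀ p, i - m ≤ p → p < k → c p < c (p+m) := by
        intro p h1 h2
        have := Nat.find_min hex h2
        push_neg at this
        exact this h1 (by omega)
      have hcross : ∀ p, k ≤ p → p ≤ m → c (p+m) ≤ c p := by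
        intro p h1 h2
        calc c (p+m) ≤ c (k+m) := hdec (k+m) (p+m) (by omega) (by omega) (by omega)
          _ ≤ c k := hk3
          _ ≤ c p := hinc k p (by omega) h1 (by omega)
      rcases le_or_gt k (i - m) with hkj | hkj
      · refine ⟨0, m, le_refl m, ?_, ?_⟩
        · refine adj_incr (fun p => max (c ((p-1+0) % m + 1)) (c ((p-1+0) % m + 1 + m))) 1 m ?_
          intro p hp hpb
          show max (c ((p-1+0) % m + 1)) (c ((p-1+0) % m + 1 + m)) ≤
            max (c ((p+1-1+0) % m + 1)) (c ((p+1-1+0) % m + 1 + m))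
          rw [hpos p (by omega) (by omega), hpos (p+1) (by omega) (by omega)]
          rcases le_or_gt (p+1) (i-m) with hpj | hpj
          · exact max_le_max (hinc p (p+1) hp (by omega) (by omega))
              (hinc (p+m) (p+1+m) (by omega) (by omega) (by omega))
          · rw [max_eq_left (hcross p (by omega) (by omega)),
                max_eq_left (hcross (p+1) (by omega) (by omega))]
            exact hinc p (p+1) hp (by omega) (by omega)
        · intro p q h1 h2 h3
          have : p = q := by omega
          rw [this]
      · have hs1 : ∀ p, 1 ≤ p → p + k ≤ m + 1 → (p - 1 + (k-1)) % m + 1 = p + k - 1 := by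
          intro p h1 h2
          rw [show p - 1 + (k-1) = p + k - 2 by omega, Nat.mod_eq_of_lt (by omega)]
          omega
        have hs2 : ∀ p, m + 2 ≤ p + k → p ≤ m → (p - 1 + (k-1)) % m + 1 = p + k - 1 - m := by
          intro p h1 h2
          rw [show p - 1 + (k-1) = p + k - 2 by omega, mod_mid _ _ (by omega) (by omega)]
          omega
        refine ⟨k - 1, i - k + 1, by omega, ?_, ?_⟩
        · refine adj_incr (fun p => max (c ((p-1+(k-1)) % m + 1)) (c ((p-1+(k-1)) % m + 1 + m)))
            1 (i - k + 1) ?_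
          intro p hp hpb
          show max (c ((p-1+(k-1)) % m + 1)) (c ((p-1+(k-1)) % m + 1 + m)) ≤
            max (c ((p+1-1+(k-1)) % m + 1)) (c ((p+1-1+(k-1)) % m + 1 + m))
          rcases lt_trichotomy (p+k) (m+1) with hc1 | hc1 | hc1
          · rw [hs1 p (by omega) (by omega), hs1 (p+1) (by omega) (by omega)]
            rw [max_eq_left (hcross (p+k-1) (by omega) (by omega)),
                max_eq_left (hcross (p+1+k-1) (by omega) (by omega))]
            exact hinc (p+k-1) (p+1+k-1) (by omega) (by omega) (by omega)
          · rw [hs1 p (by omega) (by omega)]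
            rw [show p+1-1+(k-1) = m by omega, Nat.mod_self, Nat.zero_add]
            rw [show p+k-1 = m by omega]
            rw [max_eq_left (hcross m (by omega) (by omega))]
            exact le_trans (hinc m (1+m) (by omega) (by omega) (by omega)) (le_max_right _ _)
          · rw [hs2 p (by omega) (by omega), hs2 (p+1) (by omega) (by omega)]
            exact max_le_max (hinc (p+k-1-m) (p+1+k-1-m) (by omega) (by omega) (by omega))
              (hinc (p+k-1-m+m) (p+1+k-1-m+m) (by omega) (by omega) (by omega))
        · refine adj_decr (fun p => max (c ((p-1+(k-1)) % m + 1)) (c ((p-1+(k-1)) % m + 1 + m)))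
            (i - k + 1) m ?_
          intro p hp hpb
          show max (c ((p+1-1+(k-1)) % m + 1)) (c ((p+1-1+(k-1)) % m + 1 + m)) ≤
            max (c ((p-1+(k-1)) % m + 1)) (c ((p-1+(k-1)) % m + 1 + m))
          rw [hs2 p (by omega) (by omega), hs2 (p+1) (by omega) (by omega)]
          rw [max_eq_right (hlow (p+k-1-m) (by omega) (by omega)).le,
              max_eq_right (hlow (p+1+k-1-m) (by omega) (by omega)).le]
          exact hdec (p+k-1-m+m) (p+1+k-1-m+m) (by omega) (by omega) (by omega)
    · push_neg at hex
      refine ⟨0, i - m, by omega, ?_, ?_⟩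
      · refine adj_incr (fun p => max (c ((p-1+0) % m + 1)) (c ((p-1+0) % m + 1 + m))) 1 (i-m) ?_
        intro p hp hpb
        show max (c ((p-1+0) % m + 1)) (c ((p-1+0) % m + 1 + m)) ≤
          max (c ((p+1-1+0) % m + 1)) (c ((p+1-1+0) % m + 1 + m))
        rw [hpos p (by omega) (by omega), hpos (p+1) (by omega) (by omega)]
        exact max_le_max (hinc p (p+1) hp (by omega) (by omega))
          (hinc (p+m) (p+1+m) (by omega) (by omega) (by omega))
      · refine adj_decr (fun p => max (c ((p-1+0) % m + 1)) (c ((p-1+0) % m + 1 + m))) (i-m) m ?_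
        intro p hp hpb
        show max (c ((p+1-1+0) % m + 1)) (c ((p+1-1+0) % m + 1 + m)) ≤
          max (c ((p-1+0) % m + 1)) (c ((p-1+0) % m + 1 + m))
        rw [hpos p (by omega) (by omega), hpos (p+1) (by omega) (by omega)]
        rw [max_eq_right (hex p (by omega) (by omega)).le,
            max_eq_right (hex (p+1) (by omega) (by omega)).le]
        exact hdec (p+m) (p+1+m) (by omega) (by omega) (by omega)

/-- A sequence `x` (with entries at indices `1..n`) is bitonic if some circular
shift of it first increases (up to position `i`) and then decreases. -/
def Bitonic (n : ℕ) (x : ℕ → ℕ) : Prop :=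
  ∃ r i, i ≤ n ∧
    (∀ p q, 1 ≤ p → p ≤ q → q ≤ i → x ((p - 1 + r) % n + 1) ≤ x ((q - 1 + r) % n + 1)) ∧
    (∀ p q, i ≤ p → p ≤ q → q ≤ n → x ((q - 1 + r) % n + 1) ≤ x ((p - 1 + r) % n + 1))

/-- If `b` of length `n = 2m` is bitonic and `y = split(b)`, then `left(y)` and
`right(y)` are bitonic and `left(y) ⪰ right(y)`. -/
theorem split_of_bitonic (m : ℕ) (hm : 1 ≤ m) (b y : ℕ → ℕ)
    (hb : Bitonic (2 * m) b)
    (hy : ∀ i, 1 ≤ i → i ≤ m →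
      y i = max (b i) (b (i + m)) ∧ y (i + m) = min (b i) (b (i + m))) :
    Bitonic m (fun i => y i) ∧ Bitonic m (fun i => y (i + m)) ∧
      ∀ i j, 1 ≤ i → i ≤ m → 1 ≤ j → j ≤ m → y (j + m) ≤ y i := by
  obtain ⟨r, i, hi, hinc, hdec⟩ := hb
  have hinc' : ∀ p q, 1 ≤ p → p ≤ q → q ≤ i →
      b ((p - 1 + r) % (2*m) + 1) ≤ b ((q - 1 + r) % (2*m) + 1) := hinc
  have hdec' : ∀ p q, i ≤ p → p ≤ q → q ≤ 2*m →
      b ((q - 1 + r) % (2*m) + 1) ≤ b ((p - 1 + r) % (2*m) + 1) := hdec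
  set c : ℕ → ℕ := fun p => b ((p - 1 + r) % (2*m) + 1) with hc
  have key : ∀ p, 1 ≤ p →
      (y ((p - 1 + r) % m + 1) = max (c p) (c (p+m)) ∧
       y ((p - 1 + r) % m + 1 + m) = min (c p) (c (p+m))) := by
    intro p hp
    have hj1 : 1 ≤ (p - 1 + r) % m + 1 := Nat.succ_le_succ (Nat.zero_le _)
    have hj2 : (p - 1 + r) % m + 1 ≤ m := Nat.succ_le_of_lt (Nat.mod_lt _ (by omega))
    obtain ⟨e1, e2⟩ := hy ((p - 1 + r) % m + 1) hj1 hj2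
    have hcp : c p = b ((p - 1 + r) % (2*m) + 1) := rfl
    have hcpm : c (p+m) = b ((p - 1 + r + m) % (2*m) + 1) := by
      show b ((p + m - 1 + r) % (2*m) + 1) = _
      rw [show p + m - 1 + r = p - 1 + r + m by omega]
    rcases pair_mod m (p - 1 + r) hm with ⟨h1, h2⟩ | ⟨h1, h2⟩
    · have A : c p = b ((p - 1 + r) % m + 1) := by rw [hcp, h1]
      have B : c (p+m) = b ((p - 1 + r) % m + 1 + m) := by
        rw [hcpm, h2]
        congr 1
        omega
      exact ⟨by rw [e1, A, B], by rw [e2, A, B]⟩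
    · have A : c p = b ((p - 1 + r) % m + 1 + m) := by
        rw [hcp, h1]
        congr 1
        omega
      have B : c (p+m) = b ((p - 1 + r) % m + 1) := by rw [hcpm, h2]
      constructor
      · rw [e1, A, B, max_comm]
      · rw [e2, A, B, min_comm]
  refine ⟨?_, ?_, ?_⟩
  · obtain ⟨s, j, hj, H1, H2⟩ := coreMax m hm c i hi hinc' hdec'
    have rwy : ∀ p, y ((p - 1 + (s + r)) % m + 1) =
        max (c ((p - 1 + s) % m + 1)) (c ((p - 1 + s) % m + 1 + m)) := by
      intro p
      have hk := (key ((p - 1 + s) % m + 1) (Nat.succ_le_succ (Nat.zero_le _))).1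
      simp only [Nat.add_sub_cancel] at hk
      rw [show p - 1 + (s + r) = p - 1 + s + r from (Nat.add_assoc _ _ _).symm,
          ← Nat.mod_add_mod]
      exact hk
    refine ⟨s + r, j, hj, ?_, ?_⟩
    · intro p q h1 h2 h3
      show y ((p - 1 + (s + r)) % m + 1) ≤ y ((q - 1 + (s + r)) % m + 1)
      rw [rwy p, rwy q]
      exact H1 p q h1 h2 h3
    · intro p q h1 h2 h3
      show y ((q - 1 + (s + r)) % m + 1) ≤ y ((p - 1 + (s + r)) % m + 1)
      rw [rwy p, rwy q]
      exact H2 p q h1 h2 h3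
  · obtain ⟨s, j, hj, H1, H2⟩ := coreMin m hm c i hi hinc' hdec'
    have rwy : ∀ p, y ((p - 1 + (s + r)) % m + 1 + m) =
        min (c ((p - 1 + s) % m + 1)) (c ((p - 1 + s) % m + 1 + m)) := by
      intro p
      have hk := (key ((p - 1 + s) % m + 1) (Nat.succ_le_succ (Nat.zero_le _))).2
      simp only [Nat.add_sub_cancel] at hk
      rw [show p - 1 + (s + r) = p - 1 + s + r from (Nat.add_assoc _ _ _).symm,
          ← Nat.mod_add_mod]
      exact hk
    refine ⟨s + r, j, hj, ?_, ?_⟩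
    · intro p q h1 h2 h3
      show y ((p - 1 + (s + r)) % m + 1 + m) ≤ y ((q - 1 + (s + r)) % m + 1 + m)
      rw [rwy p, rwy q]
      exact H1 p q h1 h2 h3
    · intro p q h1 h2 h3
      show y ((q - 1 + (s + r)) % m + 1 + m) ≤ y ((p - 1 + (s + r)) % m + 1 + m)
      rw [rwy p, rwy q]
      exact H2 p q h1 h2 h3
  · intro i' j' hi1 hi2 hj1 hj2
    obtain ⟨p, hp1, hp2, hpE⟩ := inv_rot m r hm i' hi1 hi2
    obtain ⟨q, hq1, hq2, hqE⟩ := inv_rot m r hm j' hj1 hj2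
    rw [← hpE, ← hqE, (key p hp1).1, (key q hq1).2]
    exact coreCross m hm c i hi hinc' hdec' p q hp1 hp2 hq1 hq2
end

section
/- If l is top k sorted, r is top k/2 sorted, and (l_1,...,l_{k/2}) dominates (r_1,...,r_{k/2}) pointwise, then the k largest elements of the concatenation l :: r are contained among (l_1,...,l_k, r_1,...,r_{k/2}). -/
/-- `x` (entries at indices `1..n`) is top `k` sorted: the first `k` entries are
nonincreasing and dominate all remaining entries. -/
def TopSorted (k n : ℕ) (x : ℕ → ℕ) : Prop :=
  (∀ p q, 1 ≤ p → p ≤ q → q ≤ k → x q ≤ x p) ∧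
  (∀ p q, 1 ≤ p → p ≤ k → k < q → q ≤ n → x q ≤ x p)

/-- If `l` is top `k` sorted, `r` is top `k/2` sorted (both of length `h`), and
`(l 1,...,l (k/2))` dominates `(r 1,...,r (k/2))` pointwise, then the `k` largest
elements of `l :: r` are among `(l 1,...,l k, r 1,...,r (k/2))`: every element at
a non-candidate position is dominated by at least `k` candidate elements. -/
theorem k_largest_in_candidates (t h : ℕ) (ht : 1 ≤ t) (hh : 2 * t ≤ h)
    (l r : ℕ → ℕ)
    (hl : TopSorted (2 * t) h l) (hr : TopSorted t h r)
    (hdom : ∀ i, 1 ≤ i → i ≤ t → r i ≤ l i) :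
    ∀ v : ℕ,
      ((∃ i, 2 * t < i ∧ i ≤ h ∧ v = l i) ∨ (∃ i, t < i ∧ i ≤ h ∧ v = r i)) →
      2 * t ≤ (Multiset.filter (fun x => v ≤ x)
        (((Finset.Icc 1 (2 * t)).val.map l) + ((Finset.Icc 1 t).val.map r))).card := by
  rintro v (⟨i, hi1, hi2, rfl⟩ | ⟨i, hi1, hi2, rfl⟩)
  · rw [Multiset.filter_add, Multiset.card_add]
    have heq : Multiset.filter (fun x => l i ≤ x) ((Finset.Icc 1 (2 * t)).val.map l)
        = (Finset.Icc 1 (2 * t)).val.map l := by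
      rw [Multiset.filter_eq_self]
      intro x hx
      obtain ⟨j, hj, rfl⟩ := Multiset.mem_map.mp hx
      rw [Finset.mem_val, Finset.mem_Icc] at hj
      exact hl.2 j i hj.1 hj.2 hi1 hi2
    rw [heq, Multiset.card_map, Finset.card_val, Nat.card_Icc]
    omega
  · rw [Multiset.filter_add, Multiset.card_add]
    have h1 : t ≤ (Multiset.filter (fun x => r i ≤ x)
        ((Finset.Icc 1 (2 * t)).val.map l)).card := by
      have hsub : (Finset.Icc 1 t).val.map l ≤ (Finset.Icc 1 (2 * t)).val.map l := by
        apply Multiset.map_le_map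
        rw [Finset.val_le_iff]
        exact Finset.Icc_subset_Icc_right (by omega)
      have := Multiset.card_le_card
        (Multiset.filter_le_filter (fun x => r i ≤ x) hsub)
      refine le_trans ?_ this
      have heq : Multiset.filter (fun x => r i ≤ x) ((Finset.Icc 1 t).val.map l)
          = (Finset.Icc 1 t).val.map l := by
        rw [Multiset.filter_eq_self]
        intro x hx
        obtain ⟨j, hj, rfl⟩ := Multiset.mem_map.mp hx
        rw [Finset.mem_val, Finset.mem_Icc] at hj
        exact le_trans (hr.2 j i hj.1 hj.2 hi1 hi2) (hdom j hj.1 hj.2)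
      rw [heq, Multiset.card_map, Finset.card_val, Nat.card_Icc]
      omega
    have h2 : t ≤ (Multiset.filter (fun x => r i ≤ x)
        ((Finset.Icc 1 t).val.map r)).card := by
      have heq : Multiset.filter (fun x => r i ≤ x) ((Finset.Icc 1 t).val.map r)
          = (Finset.Icc 1 t).val.map r := by
        rw [Multiset.filter_eq_self]
        intro x hx
        obtain ⟨j, hj, rfl⟩ := Multiset.mem_map.mp hx
        rw [Finset.mem_val, Finset.mem_Icc] at hj
        exact hr.2 j i hj.1 hj.2 hi1 hi2
      rw [heq, Multiset.card_map, Finset.card_val, Nat.card_Icc]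
      omega
    omega
end

section
/- Let l be top k sorted, r be top k/2 sorted, with (l_1,...,l_{k/2}) dominating (r_1,...,r_{k/2}) pointwise. Apply the bitonic splitter to (l_{k/2+1},...,l_k, r_1,...,r_{k/2}), obtaining y (y_i = max{l_{k/2+i}, r_{k/2-i+1}} for the first half, mins in second half in reversed pairing). Then b = (l_1,...,l_{k/2}, y_1,...,y_{k/2}) is bitonic and contains the k largest elements of l :: r. -/
/-- A "valley" sequence (nonincreasing up to `s`, nondecreasing after) is bitonic. -/
lemma valley_bitonic (n : ℕ) (b : ℕ → ℕ) (s : ℕ) (hs1 : 1 ≤ s) (hsn : s ≤ n)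
    (hdec : ∀ p q, 1 ≤ p → p ≤ q → q ≤ s → b q ≤ b p)
    (hinc : ∀ p q, s ≤ p → p ≤ q → q ≤ n → b p ≤ b q) :
    Bitonic n b := by
  have hn : 1 ≤ n := le_trans hs1 hsn
  have key : ∀ p, 1 ≤ p → p ≤ n →
      (p - 1 + (s - 1)) % n + 1 = if p + s ≤ n + 1 then p + s - 1 else p + s - 1 - n := by
    intro p hp1 hpn
    split
    · next hc =>
      have h1 : p - 1 + (s - 1) = p + s - 2 := by omega
      rw [h1, Nat.mod_eq_of_lt (by omega)]
      omega
    · next hc =>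
      have h1 : p - 1 + (s - 1) = (p + s - 2 - n) + n := by omega
      rw [h1, Nat.add_mod_right, Nat.mod_eq_of_lt (by omega)]
      omega
  by_cases hcase : b 1 ≤ b n
  · refine ⟨s - 1, n - s + 1, by omega, ?_, ?_⟩
    · intro p q hp hpq hq
      rw [key p (by omega) (by omega), key q (by omega) (by omega),
        if_pos (by omega : p + s ≤ n + 1), if_pos (by omega : q + s ≤ n + 1)]
      exact hinc _ _ (by omega) (by omega) (by omega)
    · intro p q hp hpq hq
      rcases eq_or_lt_of_le hpq with rfl | hlt
      · exact le_refl _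
      rw [key p (by omega) (by omega), key q (by omega) (by omega),
        if_neg (by omega : ¬ q + s ≤ n + 1)]
      by_cases hp2 : p + s ≤ n + 1
      · rw [if_pos hp2]
        have hpn : p + s - 1 = n := by omega
        rw [hpn]
        exact le_trans (hdec 1 (q + s - 1 - n) (by omega) (by omega) (by omega)) hcase
      · rw [if_neg hp2]
        exact hdec _ _ (by omega) (by omega) (by omega)
  · have hbn : b n < b 1 := lt_of_not_ge hcase
    have hs2 : 2 ≤ s := by
      by_contra hc
      exact hcase (hinc 1 n (by omega) hn (le_refl n))
    refine ⟨s - 1, n - s + 2, by omega, ?_, ?_⟩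
    · intro p q hp hpq hq
      rw [key p (by omega) (by omega), key q (by omega) (by omega)]
      by_cases hq2 : q + s ≤ n + 1
      · rw [if_pos (by omega : p + s ≤ n + 1), if_pos hq2]
        exact hinc _ _ (by omega) (by omega) (by omega)
      · rw [if_neg hq2]
        have hqn : q + s - 1 - n = 1 := by omega
        rw [hqn]
        by_cases hp2 : p + s ≤ n + 1
        · rw [if_pos hp2]
          exact le_trans (hinc (p + s - 1) n (by omega) (by omega) (le_refl n)) (le_of_lt hbn)
        · rw [if_neg hp2]
          have hpn : p + s - 1 - n = 1 := by omega
          rw [hpn]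
    · intro p q hp hpq hq
      rw [key p (by omega) (by omega), key q (by omega) (by omega),
        if_neg (by omega : ¬ p + s ≤ n + 1), if_neg (by omega : ¬ q + s ≤ n + 1)]
      exact hdec _ _ (by omega) (by omega) (by omega)

/-- First step of the improved pairwise merger: with `k = 2t`, applying the
bitonic splitter to `(l_{t+1},…,l_{2t}, r_1,…,r_t)` yields maxima
`y_i = max (l (t+i)) (r (t-i+1))`, and `b = (l_1,…,l_t, y_1,…,y_t)` is bitonic
and contains the `k` largest elements of `l :: r` (i.e. dominates every
discarded element). -/
theorem pw_bit_merge_step (t h : ℕ) (ht : 1 ≤ t) (hh : 2 * t ≤ h)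
    (l r b : ℕ → ℕ)
    (hl : TopSorted (2 * t) h l) (hr : TopSorted t h r)
    (hdom : ∀ i, 1 ≤ i → i ≤ t → r i ≤ l i)
    (hb1 : ∀ i, 1 ≤ i → i ≤ t → b i = l i)
    (hb2 : ∀ i, 1 ≤ i → i ≤ t → b (t + i) = max (l (t + i)) (r (t - i + 1))) :
    Bitonic (2 * t) b ∧
      ∀ i, 1 ≤ i → i ≤ 2 * t →
        (∀ j, 2 * t < j → j ≤ h → l j ≤ b i) ∧
        (∀ j, t < j → j ≤ h → r j ≤ b i) ∧
        (∀ j, 1 ≤ j → j ≤ t → min (l (t + j)) (r (t - j + 1)) ≤ b i) := by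
  obtain ⟨hl1, hl2⟩ := hl
  obtain ⟨hr1, hr2⟩ := hr
  obtain ⟨m, hmdef⟩ : ∃ m, m = Nat.findGreatest (fun i => r (t - i + 1) ≤ l (t + i)) t :=
    ⟨_, rfl⟩
  have hmt : m ≤ t := hmdef ▸ Nat.findGreatest_le t
  -- on indices ≤ m (past t), b agrees with l
  have hbl : ∀ i, 1 ≤ i → i ≤ m → b (t + i) = l (t + i) := by
    intro i hi1 him
    rw [hb2 i hi1 (le_trans him hmt)]
    apply max_eq_left
    have hPm : r (t - m + 1) ≤ l (t + m) :=
      Nat.findGreatest_of_ne_zero (P := fun i => r (t - i + 1) ≤ l (t + i))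
        hmdef.symm (by omega)
    calc r (t - i + 1) ≤ r (t - m + 1) := hr1 _ _ (by omega) (by omega) (by omega)
      _ ≤ l (t + m) := hPm
      _ ≤ l (t + i) := hl1 _ _ (by omega) (by omega) (by omega)
  -- on indices > m, b agrees with r
  have hbr : ∀ i, m < i → i ≤ t → b (t + i) = r (t - i + 1) := by
    intro i hmi hit
    rw [hb2 i (by omega) hit]
    apply max_eq_right
    have hlt : Nat.findGreatest (fun i => r (t - i + 1) ≤ l (t + i)) t < i := by
      rw [← hmdef]; exact hmi
    have := Nat.findGreatest_is_greatest (P := fun i => r (t - i + 1) ≤ l (t + i)) hlt hit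
    omega
  -- b is nonincreasing on [1, t+m]
  have hdec : ∀ p q, 1 ≤ p → p ≤ q → q ≤ t + m → b q ≤ b p := by
    have bval : ∀ j, 1 ≤ j → j ≤ t + m → b j = l j := by
      intro j h1 h2
      rcases le_or_gt j t with hj | hj
      · exact hb1 j h1 hj
      · have := hbl (j - t) (by omega) (by omega)
        rwa [show t + (j - t) = j by omega] at this
    intro p q hp hpq hq
    rw [bval p hp (le_trans hpq hq), bval q (by omega) hq]
    exact hl1 p q hp hpq (by omega)
  -- b is nondecreasing on [t+m+1, 2t]
  have hinc' : ∀ p q, t + m + 1 ≤ p → p ≤ q → q ≤ 2 * t → b p ≤ b q := by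
    intro p q hp hpq hq
    have hpv := hbr (p - t) (by omega) (by omega)
    have hqv := hbr (q - t) (by omega) (by omega)
    rw [show t + (p - t) = p by omega] at hpv
    rw [show t + (q - t) = q by omega] at hqv
    rw [hpv, hqv]
    exact hr1 _ _ (by omega) (by omega) (by omega)
  constructor
  · -- bitonicity: find a valley point
    rcases eq_or_lt_of_le hmt with heq | hmlt
    · exact valley_bitonic _ b (t + m) (by omega) (by omega) hdec
        (fun p q hp hpq hq => by
          have hpq' : p = q := by omega
          rw [hpq'])
    · by_cases hv : b (t + m) ≤ b (t + m + 1)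
      · refine valley_bitonic _ b (t + m) (by omega) (by omega) hdec ?_
        intro p q hp hpq hq
        rcases eq_or_lt_of_le hp with rfl | hp'
        · rcases eq_or_lt_of_le hpq with rfl | hq'
          · exact le_refl _
          · exact le_trans hv (hinc' (t + m + 1) q (le_refl _) (by omega) hq)
        · exact hinc' p q (by omega) hpq hq
      · refine valley_bitonic _ b (t + m + 1) (by omega) (by omega) ?_ ?_
        · intro p q hp hpq hq
          rcases eq_or_lt_of_le hq with rfl | hq'
          · rcases eq_or_lt_of_le hpq with rfl | hp'
            · exact le_refl _
            · exact le_trans (le_of_lt (lt_of_not_ge hv))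
                (hdec p (t + m) hp (by omega) (le_refl _))
          · exact hdec p q hp hpq (by omega)
        · intro p q hp hpq hq
          exact hinc' p q hp hpq hq
  · -- domination of discarded elements
    intro i hi1 hi2
    rcases le_or_gt i t with hit | hit
    · rw [hb1 i hi1 hit]
      refine ⟨?_, ?_, ?_⟩
      · intro j hj1 hj2
        exact hl2 i j hi1 (by omega) hj1 hj2
      · intro j hj1 hj2
        exact le_trans (hr2 i j hi1 hit hj1 hj2) (hdom i hi1 hit)
      · intro j hj1 hj2
        exact le_trans (min_le_left _ _) (hl1 i (t + j) hi1 (by omega) (by omega))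
    · have hival := hb2 (i - t) (by omega) (by omega)
      rw [show t + (i - t) = i by omega] at hival
      rw [hival]
      refine ⟨?_, ?_, ?_⟩
      · intro j hj1 hj2
        exact le_trans (hl2 i j (by omega) (by omega) hj1 hj2) (le_max_left _ _)
      · intro j hj1 hj2
        exact le_trans (hr2 (t - (i - t) + 1) j (by omega) (by omega) (by omega) hj2)
          (le_max_right _ _)
      · intro j hj1 hj2
        rcases le_or_gt j (i - t) with hji | hji
        · exact le_trans (min_le_right _ _)
            (le_trans (hr1 (t - (i - t) + 1) (t - j + 1) (by omega) (by omega) (by omega))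
              (le_max_right _ _))
        · exact le_trans (min_le_left _ _)
            (le_trans (hl1 i (t + j) (by omega) (by omega) (by omega))
              (le_max_left _ _))
end

section
/- If b = (b_1,...,b_k) is v-shaped and s-dominating, then b is nonincreasing, or there exists i with k/2 < i < k such that b_i < b_{i+1}. -/
/-- `b` (entries at indices `1..k`) is v-shaped: nonincreasing up to some index
`i`, then nondecreasing. -/
def VShaped (k : ℕ) (b : ℕ → ℕ) : Prop :=
  ∃ i, 1 ≤ i ∧ i ≤ k ∧
    (∀ p q, 1 ≤ p → p ≤ q → q ≤ i → b q ≤ b p) ∧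
    (∀ p q, i ≤ p → p ≤ q → q ≤ k → b p ≤ b q)

/-- `b` (entries at indices `1..k`) is s-dominating: `b j ≥ b (k-j+1)` for all
`1 ≤ j ≤ k/2`. -/
def SDominating (k : ℕ) (b : ℕ → ℕ) : Prop :=
  ∀ j, 1 ≤ j → j ≤ k / 2 → b (k - j + 1) ≤ b j

lemma antitone_of_adj (b : ℕ → ℕ) (p q : ℕ)
    (h : ∀ j, p ≤ j → j < q → b (j + 1) ≤ b j) (hpq : p ≤ q) : b q ≤ b p := by
  induction q with
  | zero => simpa [Nat.le_zero.mp hpq]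
  | succ n ih =>
    rcases Nat.lt_or_ge p (n + 1) with h1 | h1
    · have hpn : p ≤ n := Nat.lt_succ_iff.mp h1
      exact le_trans (h n hpn (Nat.lt_succ_self n))
        (ih (fun j hj hjn => h j hj (Nat.lt_succ_of_lt hjn)) hpn)
    · have : p = n + 1 := le_antisymm hpq h1
      simp [this]

/-- If `b` of (even) length `k = 2t` is v-shaped and s-dominating, then `b` is
nonincreasing or there exists `i` with `k/2 < i < k` and `b i < b (i+1)`. -/
theorem vshape_sdom_cases (t : ℕ) (ht : 1 ≤ t) (b : ℕ → ℕ)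
    (hv : VShaped (2 * t) b) (hs : SDominating (2 * t) b) :
    (∀ p q, 1 ≤ p → p ≤ q → q ≤ 2 * t → b q ≤ b p) ∨
      ∃ i, t < i ∧ i < 2 * t ∧ b i < b (i + 1) := by
  obtain ⟨i0, hi0one, hi0k, hdec, hinc⟩ := hv
  by_cases H : ∀ p q, 1 ≤ p → p ≤ q → q ≤ 2 * t → b q ≤ b p
  · exact Or.inl H
  · right
    push_neg at H
    obtain ⟨p, q, hp1, hpq, hqk, hlt⟩ := H
    -- find adjacent increase
    by_cases Hadj : ∀ j, p ≤ j → j < q → b (j + 1) ≤ b j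
    · exact absurd (antitone_of_adj b p q Hadj hpq) (not_le.mpr hlt)
    push_neg at Hadj
    obtain ⟨j, hpj, hjq, hadj⟩ := Hadj
    have hj1 : 1 ≤ j := le_trans hp1 hpj
    have hjk : j < 2 * t := lt_of_lt_of_le hjq hqk
    refine ⟨j, ?_, hjk, hadj⟩
    by_contra hjt
    push_neg at hjt  -- j ≤ t
    -- i0 ≤ j
    have hij : i0 ≤ j := by
      by_contra h
      push_neg at h
      exact absurd (hdec j (j + 1) hj1 (Nat.le_succ j) h) (not_le.mpr hadj)
    have h1 : b (j + 1) ≤ b (2 * t - j + 1) := by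
      apply hinc (j + 1) (2 * t - j + 1) (le_trans hij (Nat.le_succ j))
      · omega
      · omega
    have h2 : b (2 * t - j + 1) ≤ b j := hs j hj1 (by omega)
    exact absurd (le_trans h1 h2) (not_le.mpr hadj)
end

section
/- If b of length k is v-shaped and s-dominating, then applying the half splitter (comparators on pairs (j, j+k/2) for j = k/4+1,...,k/2) gives the same result as applying the full splitter (comparators on pairs (j, j+k/2) for j = 1,...,k/2); i.e., for all 1 ≤ j ≤ k/4, b_j ≥ b_{j+k/2}. -/
/-- If `b` of length `k` (a power of two, `k ≥ 4`) is v-shaped and s-dominating,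
then the half splitter equals the full splitter on `b`: the omitted comparators
`(j, j + k/2)`, `1 ≤ j ≤ k/4`, would not change anything since `b j ≥ b (j+k/2)`. -/
theorem half_split_eq_split (k : ℕ) (hk : ∃ c, 2 ≤ c ∧ k = 2 ^ c)
    (b : ℕ → ℕ) (hv : VShaped k b) (hs : SDominating k b) :
    ∀ j, 1 ≤ j → j ≤ k / 4 → b (j + k / 2) ≤ b j := by
  obtain ⟨c, hc, rfl⟩ := hk
  have h4 : (4 : ℕ) ∣ 2 ^ c := by
    have : (2:ℕ) ^ 2 ∣ 2 ^ c := pow_dvd_pow 2 hc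
    simpa using this
  obtain ⟨m, hm⟩ := h4
  intro j hj1 hj4
  obtain ⟨i, hi1, hik, hdec, hinc⟩ := hv
  rcases le_or_gt i (j + 2 ^ c / 2) with h | h
  · -- increasing part: b (j + k/2) ≤ b (k - j + 1) ≤ b j
    have hle : j + 2 ^ c / 2 ≤ 2 ^ c - j + 1 := by omega
    have h1 : b (j + 2 ^ c / 2) ≤ b (2 ^ c - j + 1) :=
      hinc _ _ h hle (by omega)
    exact h1.trans (hs j hj1 (by omega))
  · -- decreasing part
    exact hdec j (j + 2 ^ c / 2) hj1 (by omega) (by omega)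
end

section
/- Let b of length k be v-shaped and s-dominating, and let w = split^k(b) (comparators on pairs (j, j+k/2) for all j = 1..k/2). Then left(w) is v-shaped and s-dominating, right(w) is bitonic, and every element of left(w) is ≥ every element of right(w). -/
/-- A sequence that, after rotation by `r`, is decreasing on `[1,a]` and increasing
on `[a,m]` is bitonic (rotate further to the valley). -/
theorem bitonic_of_rot (m r a : ℕ) (x y : ℕ → ℕ)
    (hyx : ∀ p, 1 ≤ p → p ≤ m → y p = x ((p - 1 + r) % m + 1))
    (ha1 : 1 ≤ a) (ham : a ≤ m)
    (hd : ∀ p q, 1 ≤ p → p ≤ q → q ≤ a → y q ≤ y p)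
    (hi : ∀ p q, a ≤ p → p ≤ q → q ≤ m → y p ≤ y q) :
    Bitonic m x := by
  classical
  have hm : 1 ≤ m := le_trans ha1 ham
  have zval : ∀ p, 1 ≤ p → p ≤ m →
      x ((p - 1 + (r + (a - 1))) % m + 1) =
        if p + a - 1 ≤ m then y (p + a - 1) else y (p + a - 1 - m) := by
    intro p h1 h2
    by_cases hc : p + a - 1 ≤ m
    · rw [if_pos hc, hyx (p + a - 1) (by omega) hc]
      have e : p + a - 1 - 1 + r = p - 1 + (r + (a - 1)) := by omega
      rw [e]
    · rw [if_neg hc, hyx (p + a - 1 - m) (by omega) (by omega)]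
      have e : p - 1 + (r + (a - 1)) = (p + a - 1 - m - 1 + r) + m := by omega
      rw [e, Nat.add_mod_right]
  refine ⟨r + (a - 1), if 2 ≤ a ∧ y m ≤ y 1 then m - a + 2 else m - a + 1, ?_, ?_, ?_⟩
  · split_ifs <;> omega
  · intro p q h1 h2 h3
    split_ifs at h3 with hcase
    · rw [zval p (by omega) (by omega), zval q (by omega) (by omega)]
      by_cases hq : q + a - 1 ≤ m
      · rw [if_pos hq, if_pos (show p + a - 1 ≤ m by omega)]
        exact hi (p + a - 1) (q + a - 1) (by omega) (by omega) hq
      · rw [if_neg hq]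
        have hq1 : q + a - 1 - m = 1 := by omega
        rw [hq1]
        by_cases hp : p + a - 1 ≤ m
        · rw [if_pos hp]
          exact le_trans (hi (p + a - 1) m (by omega) (by omega) le_rfl) hcase.2
        · rw [if_neg hp]
          have e : p + a - 1 - m = 1 := by omega
          rw [e]
    · rw [zval p (by omega) (by omega), zval q (by omega) (by omega),
        if_pos (show p + a - 1 ≤ m by omega), if_pos (show q + a - 1 ≤ m by omega)]
      exact hi (p + a - 1) (q + a - 1) (by omega) (by omega) (by omega)
  · intro p q h1 h2 h3
    split_ifs at h1 with hcase
    · rw [zval p (by omega) (by omega), zval q (by omega) h3,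
        if_neg (show ¬ p + a - 1 ≤ m by omega), if_neg (show ¬ q + a - 1 ≤ m by omega)]
      exact hd (p + a - 1 - m) (q + a - 1 - m) (by omega) (by omega) (by omega)
    · by_cases ha2 : 2 ≤ a
      · have hy1m : ¬ y m ≤ y 1 := fun h => hcase ⟨ha2, h⟩
        rw [zval p (by omega) (by omega), zval q (by omega) h3]
        by_cases hp : p + a - 1 ≤ m
        · have hpm : p + a - 1 = m := by omega
          rw [if_pos hp, hpm]
          by_cases hq : q + a - 1 ≤ m
          · have e : q + a - 1 = m := by omega
            rw [if_pos hq, e]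
          · rw [if_neg hq]
            exact le_trans (hd 1 (q + a - 1 - m) (by omega) (by omega) (by omega))
              (le_of_not_ge hy1m)
        · rw [if_neg hp, if_neg (show ¬ q + a - 1 ≤ m by omega)]
          exact hd (p + a - 1 - m) (q + a - 1 - m) (by omega) (by omega) (by omega)
      · have hpq : p = q := by omega
        rw [hpq]

/-- If `b` of length `k` (a power of two) is v-shaped and s-dominating and
`w = split^k(b)`, then `left(w)` is v-shaped and s-dominating, `right(w)` is
bitonic, and `left(w) ⪰ right(w)`. -/
theorem split_vshape_sdom (k : ℕ) (hk : ∃ c, 1 ≤ c ∧ k = 2 ^ c)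
    (b w : ℕ → ℕ) (hv : VShaped k b) (hs : SDominating k b)
    (hw : ∀ j, 1 ≤ j → j ≤ k / 2 →
      w j = max (b j) (b (j + k / 2)) ∧ w (j + k / 2) = min (b j) (b (j + k / 2))) :
    VShaped (k / 2) w ∧ SDominating (k / 2) w ∧
      Bitonic (k / 2) (fun j => w (j + k / 2)) ∧
      ∀ i j, 1 ≤ i → i ≤ k / 2 → 1 ≤ j → j ≤ k / 2 → w (j + k / 2) ≤ w i := by
  classical
  obtain ⟨c, hc1, hc2⟩ := hk
  have hkm : k = 2 * (k / 2) ∧ 1 ≤ k / 2 := by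
    have h2 : k = 2 * 2 ^ (c - 1) := by
      rw [hc2]
      conv_lhs => rw [show c = 1 + (c - 1) from by omega]
      rw [pow_add, pow_one]
    have h3 : 1 ≤ 2 ^ (c - 1) := Nat.one_le_two_pow
    omega
  set m := k / 2 with hmdef
  obtain ⟨hk2, hm1⟩ := hkm
  obtain ⟨i₀, hi01, hi0k, hdec, hinc⟩ := hv
  have hwmax : ∀ j, 1 ≤ j → j ≤ m → w j = max (b j) (b (j + m)) := fun j h1 h2 => (hw j h1 h2).1
  have hwmin : ∀ j, 1 ≤ j → j ≤ m → w (j + m) = min (b j) (b (j + m)) :=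
    fun j h1 h2 => (hw j h1 h2).2
  have hbw1 : ∀ j, 1 ≤ j → j ≤ m → b j ≤ w j := by
    intro j h1 h2; rw [hwmax j h1 h2]; exact le_max_left _ _
  have hbw2 : ∀ j, 1 ≤ j → j ≤ m → b (j + m) ≤ w j := by
    intro j h1 h2; rw [hwmax j h1 h2]; exact le_max_right _ _
  have hbC : ∀ p q r, 1 ≤ p → p ≤ q → q ≤ r → r ≤ k → b q ≤ max (b p) (b r) := by
    intro p q r h1 h2 h3 h4
    by_cases hq : q ≤ i₀
    · exact le_max_of_le_left (hdec p q h1 h2 hq)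
    · exact le_max_of_le_right (hinc q r (by omega) h3 h4)
  have hC : ∀ p q r, 1 ≤ p → p ≤ q → q ≤ r → r ≤ m → w q ≤ max (w p) (w r) := by
    intro p q r h1 h2 h3 h4
    rw [hwmax q (by omega) (by omega)]
    apply max_le
    · exact le_trans (hbC p q r h1 h2 h3 (by omega))
        (max_le_max (hbw1 p h1 (by omega)) (hbw1 r (by omega) h4))
    · exact le_trans (hbC (p + m) (q + m) (r + m) (by omega) (by omega) (by omega) (by omega))
        (max_le_max (hbw2 p h1 (by omega)) (hbw2 r (by omega) h4))
  refine ⟨?_, ?_, ?_, ?_⟩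
  · -- VShaped
    obtain ⟨iw, hiwmem, hiwmin⟩ := Finset.exists_min_image (Finset.Icc 1 m) w
      ⟨1, Finset.mem_Icc.mpr ⟨le_refl 1, hm1⟩⟩
    rw [Finset.mem_Icc] at hiwmem
    refine ⟨iw, hiwmem.1, hiwmem.2, ?_, ?_⟩
    · intro p q h1 h2 h3
      have h4 : w iw ≤ w p := hiwmin p (Finset.mem_Icc.mpr ⟨h1, by omega⟩)
      have h5 := hC p q iw h1 h2 h3 hiwmem.2
      rwa [max_eq_left h4] at h5
    · intro p q h1 h2 h3
      have h4 : w iw ≤ w q := hiwmin q (Finset.mem_Icc.mpr ⟨by omega, h3⟩)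
      have h5 := hC iw p q hiwmem.1 h1 h2 h3
      rwa [max_eq_right h4] at h5
  · -- SDominating
    intro j h1 h2
    have h2' : 2 * j ≤ m := by omega
    rw [hwmax (m - j + 1) (by omega) (by omega)]
    apply max_le
    · by_cases hcase : m - j + 1 ≤ i₀
      · exact le_trans (hdec j (m - j + 1) h1 (by omega) hcase) (hbw1 j h1 (by omega))
      · exact le_trans (hinc (m - j + 1) (j + m) (by omega) (by omega) (by omega))
          (hbw2 j h1 (by omega))
    · have e : m - j + 1 + m = k - j + 1 := by omega
      rw [e]
      exact le_trans (hs j h1 (by omega)) (hbw1 j h1 (by omega))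
  · -- Bitonic
    have crossmono : ∀ j j', 1 ≤ j → j ≤ j' → j' ≤ m → b j < b (j + m) → b j' ≤ b (j' + m) := by
      intro j j' h1 h2 h3 hlt
      have hi0 : i₀ < j + m := by
        by_contra hh; push_neg at hh
        exact absurd (hdec j (j + m) h1 (by omega) hh) (by omega)
      by_cases hj' : j' ≤ i₀
      · calc b j' ≤ b j := hdec j j' h1 h2 hj'
          _ ≤ b (j + m) := le_of_lt hlt
          _ ≤ b (j' + m) := hinc (j + m) (j' + m) (by omega) (by omega) (by omega)
      · exact hinc j' (j' + m) (by omega) (by omega) (by omega)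
    have ht : ∃ t, 1 ≤ t ∧ t ≤ m + 1 ∧ (∀ j, 1 ≤ j → j + 1 ≤ t → b (j + m) ≤ b j) ∧
        (∀ j, t ≤ j → j ≤ m → b j ≤ b (j + m)) ∧ (t ≤ m → b t < b (t + m)) := by
      by_cases hex : ∃ j, 1 ≤ j ∧ j ≤ m ∧ b j < b (j + m)
      · refine ⟨Nat.find hex, (Nat.find_spec hex).1,
          by have := (Nat.find_spec hex).2.1; omega, ?_, ?_, fun _ => (Nat.find_spec hex).2.2⟩
        · intro j hj1 hj2
          have hmin := Nat.find_min hex (m := j) (by omega)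
          have hjm : j ≤ m := by have := (Nat.find_spec hex).2.1; omega
          simp only [not_and, not_lt] at hmin
          exact hmin hj1 hjm
        · intro j hj1 hj2
          exact crossmono (Nat.find hex) j (Nat.find_spec hex).1 hj1 hj2 (Nat.find_spec hex).2.2
      · push_neg at hex
        exact ⟨m + 1, by omega, le_refl _, fun j h1 h2 => hex j h1 (by omega),
          fun j h1 h2 => absurd h1 (by omega), fun h => absurd h (by omega)⟩
    obtain ⟨t, ht1, ht2, htl, htr, hts⟩ := ht
    have hwl1 : ∀ j, 1 ≤ j → j + 1 ≤ t → w (j + m) = b (j + m) := by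
      intro j h1 h2
      rw [hwmin j h1 (by omega)]
      exact min_eq_right (htl j h1 h2)
    have hwl2 : ∀ j, t ≤ j → j ≤ m → w (j + m) = b j := by
      intro j h1 h2
      rw [hwmin j (by omega) h2]
      exact min_eq_left (htr j h1 h2)
    have ham : i₀ - t + 1 ≤ m := by
      by_cases htm : t ≤ m
      · have hst := hts htm
        have hlt : i₀ < t + m := by
          by_contra hh; push_neg at hh
          exact absurd (hdec t (t + m) (by omega) (by omega) hh) (by omega)
        omega
      · omega
    apply bitonic_of_rot m (t - 1) (i₀ - t + 1) _ (fun p => b (p + t - 1)) ?_ (by omega) ham ?_ ?_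
    · intro p h1 h2
      show b (p + t - 1) = w ((p - 1 + (t - 1)) % m + 1 + m)
      have e : p - 1 + (t - 1) = p + t - 2 := by omega
      rw [e]
      by_cases hc : p + t - 2 < m
      · rw [Nat.mod_eq_of_lt hc]
        have e2 : p + t - 2 + 1 = p + t - 1 := by omega
        rw [e2, hwl2 (p + t - 1) (by omega) (by omega)]
      · push_neg at hc
        rw [Nat.mod_eq_sub_mod hc, Nat.mod_eq_of_lt (by omega)]
        have e2 : p + t - 2 - m + 1 = p + t - 1 - m := by omega
        rw [e2, hwl1 (p + t - 1 - m) (by omega) (by omega)]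
        congr 1
        omega
    · intro p q h1 h2 h3
      show b (q + t - 1) ≤ b (p + t - 1)
      by_cases hpq : p = q
      · rw [hpq]
      · exact hdec (p + t - 1) (q + t - 1) (by omega) (by omega) (by omega)
    · intro p q h1 h2 h3
      show b (p + t - 1) ≤ b (q + t - 1)
      exact hinc (p + t - 1) (q + t - 1) (by omega) (by omega) (by omega)
  · -- cross domination
    intro i j h1 h2 h3 h4
    rw [hwmin j h3 h4, hwmax i h1 h2]
    rcases lt_trichotomy i j with h | h | h
    · by_contra hcon
      push_neg at hcon
      simp only [max_lt_iff, lt_min_iff] at hcon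
      obtain ⟨⟨e1, e2⟩, e3, e4⟩ := hcon
      have hij : i₀ ≤ j := by
        by_contra hh; push_neg at hh
        exact absurd (hdec i j h1 (le_of_lt h) (by omega)) (by omega)
      have := hinc j (i + m) hij (by omega) (by omega)
      omega
    · rw [h]; exact le_trans (min_le_left _ _) (le_max_left _ _)
    · by_contra hcon
      push_neg at hcon
      simp only [max_lt_iff, lt_min_iff] at hcon
      obtain ⟨⟨e1, e2⟩, e3, e4⟩ := hcon
      have hij : j + m < i₀ := by
        by_contra hh; push_neg at hh
        exact absurd (hinc (j + m) (i + m) hh (by omega) (by omega)) (by omega)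
      have := hdec i (j + m) h1 (by omega) (by omega)
      omega
end

section
/- For m ≥ 0 and k ≥ 1: ∑_{i=0}^{m−1} ∑_{j=0}^{i} C(i,j)·(k−j)·2^{k−j−1} = 2^k·(3/2)^m·(k + 1 − m/3) − 2^k·(k+1), where the right-hand side is interpreted as 2^{k−m}·3^{m−1}·(3(k+1) − m) − 2^k(k+1). -/
lemma binom_half_sum (i : ℕ) :
    ∑ j ∈ Finset.range (i + 1), (i.choose j : ℚ) / 2 ^ j = (3 / 2) ^ i := by
  have h := add_pow (1 / (2:ℚ)) 1 i
  rw [show ((3:ℚ) / 2) = 1 / 2 + 1 by norm_num, h]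
  refine Finset.sum_congr rfl fun j _ => ?_
  rw [one_pow, div_pow, one_pow]
  ring

lemma inner_sum_dsid (k i : ℕ) :
    ∑ j ∈ Finset.range (i + 1),
        (i.choose j : ℚ) * ((k : ℚ) - j) * ((2:ℚ) ^ k / 2 ^ (j + 1)) =
      (2:ℚ) ^ k / 2 * (3 / 2) ^ i * ((k : ℚ) - i / 3) := by
  induction i with
  | zero => simp; ring
  | succ i ih =>
    set f : ℕ → ℚ := fun j => (i.choose j : ℚ) * ((k : ℚ) - j) * ((2:ℚ) ^ k / 2 ^ (j + 1)) with hf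
    have h1 : ∑ j ∈ Finset.range (i + 1), f (j + 1)
        = (∑ j ∈ Finset.range (i + 1), f j) - f 0 := by
      rw [eq_sub_iff_add_eq, ← Finset.sum_range_succ', Finset.sum_range_succ]
      simp [hf]
    rw [Finset.sum_range_succ']
    push_cast
    have expand : ∀ j ∈ Finset.range (i + 1),
        (((i+1).choose (j+1) : ℚ)) * ((k : ℚ) - (j+1)) * ((2:ℚ) ^ k / 2 ^ (j + 1 + 1)) =
          f (j + 1) + f j / 2 - ((i.choose j : ℚ) / 2 ^ j) * ((2:ℚ) ^ k / 4) := by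
      intro j _
      rw [Nat.choose_succ_succ]
      simp only [hf]
      push_cast
      ring
    rw [Finset.sum_congr rfl expand]
    simp only [Finset.sum_sub_distrib, Finset.sum_add_distrib, ← Finset.sum_div,
      ← Finset.sum_mul, h1, binom_half_sum, ← hf]
    rw [ih]
    simp only [hf, Nat.choose_zero_right]
    push_cast
    ring

/-- `∑_{i=0}^{m−1} ∑_{j=0}^{i} C(i,j)·(k−j)·2^{k−j−1}
  = 2^k·(3/2)^m·(k + 1 − m/3) − 2^k·(k+1)` (over the rationals). -/
theorem double_sum_identity (m k : ℕ) (hk : 1 ≤ k) :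
    ∑ i ∈ Finset.range m, ∑ j ∈ Finset.range (i + 1),
        (i.choose j : ℚ) * ((k : ℚ) - j) * ((2 : ℚ) ^ k / 2 ^ (j + 1)) =
      (2 : ℚ) ^ k * (3 / 2) ^ m * ((k : ℚ) + 1 - m / 3) - 2 ^ k * ((k : ℚ) + 1) := by
  induction m with
  | zero => simp
  | succ m ih =>
    rw [Finset.sum_range_succ, ih, inner_sum_dsid]
    push_cast
    ring
end

section
/- Define SD(n,k) by SD(n,n)=0, SD(n,0)=0, and SD(n,k) = 2^{k−1}k − 2^k + 1 + SD(n−1,k) + SD(n−1,k−1) for 0 < k < n. Let S(n,k) = ∑_{j=0}^{k} C(n−k+j, j)·2^{k−j}. Then SD(n,k) = C(n,k)·(n+1)/2 − S(n,k)·(n−2k+1)/2 − 2^k(k−1) − 1. -/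
/-- `S(n,k) = ∑_{j=0}^{k} C(n−k+j, j)·2^{k−j}`. -/
def S (n k : ℕ) : ℕ := ∑ j ∈ Finset.range (k + 1), (n - k + j).choose j * 2 ^ (k - j)

private def T (m k : ℕ) : ℕ := ∑ j ∈ Finset.range (k + 1), (m + j).choose j * 2 ^ (k - j)

private lemma S_eq_T (n k : ℕ) : S n k = T (n - k) k := rfl

private lemma T_zero (m : ℕ) : T m 0 = 1 := by simp [T]

private lemma T_succ (m k : ℕ) : T m (k + 1) = 2 * T m k + (m + (k + 1)).choose (k + 1) := by
  unfold T
  rw [Finset.sum_range_succ]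
  have h : ∀ j ∈ Finset.range (k + 1),
      (m + j).choose j * 2 ^ (k + 1 - j) = 2 * ((m + j).choose j * 2 ^ (k - j)) := by
    intro j hj
    rw [Finset.mem_range] at hj
    rw [show k + 1 - j = (k - j) + 1 from by omega, pow_succ]
    ring
  rw [Finset.sum_congr rfl h, ← Finset.mul_sum]
  simp

private lemma T_pascal (m k : ℕ) : T (m + 1) (k + 1) = T m (k + 1) + T (m + 1) k := by
  induction k with
  | zero => simp [T_succ, T_zero, Nat.choose_one_right]; omega
  | succ k ih =>
    have pas : (m + 1 + (k + 1 + 1)).choose (k + 1 + 1)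
        = (m + 1 + (k + 1)).choose (k + 1) + (m + 1 + (k + 1)).choose (k + 1 + 1) := by
      rw [show m + 1 + (k + 1 + 1) = (m + 1 + (k + 1)) + 1 from by ring]
      exact Nat.choose_succ_succ _ _
    rw [T_succ (m + 1) k, T_succ (m + 1) (k + 1), ih, T_succ m (k + 1), pas,
      show m + (k + 1 + 1) = m + 1 + (k + 1) from by ring]
    ring

private lemma T_diff (m k : ℕ) : T m (k + 1) = T (m + 1) k + (m + k + 2).choose (k + 1) := by
  induction k with
  | zero => simp [T_succ, T_zero, Nat.choose_one_right]; omega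
  | succ k ih =>
    have pas : (m + (k + 1) + 2).choose (k + 1 + 1)
        = (m + k + 2).choose (k + 1) + (m + k + 2).choose (k + 1 + 1) := by
      rw [show m + (k + 1) + 2 = (m + k + 2) + 1 from by ring]
      exact Nat.choose_succ_succ _ _
    rw [T_succ m (k + 1), ih, T_succ (m + 1) k, pas,
      show m + 1 + (k + 1) = m + k + 2 from by ring]
    ring

private lemma T_diag (k : ℕ) : T 0 k + 1 = 2 ^ (k + 1) := by
  induction k with
  | zero => simp [T_zero]
  | succ k ih =>
    rw [T_succ, pow_succ, ← ih]
    simp only [Nat.zero_add, Nat.choose_self]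
    omega

/-- Closed form for the size difference between the pairwise selection network
and the improved one: if `SD` satisfies the defining recurrence, then
`SD(n,k) = C(n,k)·(n+1)/2 − S(n,k)·(n−2k+1)/2 − 2^k(k−1) − 1`. -/
theorem SD_closed_form (SD : ℕ → ℕ → ℤ)
    (hdiag : ∀ n, SD n n = 0) (hzero : ∀ n, SD n 0 = 0)
    (hrec : ∀ n k, 0 < k → k < n →
      SD n k = 2 ^ (k - 1) * k - 2 ^ k + 1 + SD (n - 1) k + SD (n - 1) (k - 1)) :
    ∀ n k, k ≤ n →
      (SD n k : ℚ) = (n.choose k : ℚ) * ((n : ℚ) + 1) / 2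
        - (S n k : ℚ) * ((n : ℚ) - 2 * k + 1) / 2 - 2 ^ k * ((k : ℚ) - 1) - 1 := by
  intro n
  induction n with
  | zero =>
    intro k hk
    interval_cases k
    rw [hzero]
    norm_num [S_eq_T, T_zero]
  | succ m ih =>
    intro k hk
    rcases eq_or_ne k 0 with rfl | hk0
    · rw [hzero]
      have hS : (S (m + 1) 0 : ℚ) = 1 := by norm_num [S_eq_T, T_zero]
      rw [hS, Nat.choose_zero_right]
      push_cast
      ring
    rcases eq_or_ne k (m + 1) with rfl | hkm
    · rw [hdiag]
      have hS : (S (m + 1) (m + 1) : ℚ) = 2 * 2 ^ (m + 1) - 1 := by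
        rw [S_eq_T, Nat.sub_self]
        have := T_diag (m + 1)
        have h2 : (T 0 (m + 1) : ℚ) + 1 = 2 ^ (m + 1 + 1) := by exact_mod_cast congrArg (Nat.cast (R := ℚ)) this
        rw [pow_succ] at h2
        linarith
      rw [hS, Nat.choose_self]
      push_cast
      ring
    -- 0 < k < m + 1
    obtain ⟨j, rfl⟩ : ∃ j, k = j + 1 := ⟨k - 1, by omega⟩
    have hjm : j + 1 ≤ m := by omega
    obtain ⟨d, hd⟩ : ∃ d, m = j + 1 + d := ⟨m - (j + 1), by omega⟩
    have hrec' := hrec (m + 1) (j + 1) (by omega) (by omega)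
    simp only [Nat.add_sub_cancel] at hrec'
    have IH1 := ih (j + 1) hjm
    have IH2 := ih j (by omega)
    -- S facts
    have hS1 : (S (m + 1) (j + 1) : ℚ) = S m (j + 1) + S m j := by
      have : S (m + 1) (j + 1) = S m (j + 1) + S m j := by
        rw [S_eq_T, S_eq_T, S_eq_T, hd]
        rw [show j + 1 + d + 1 - (j + 1) = d + 1 from by omega,
          show j + 1 + d - (j + 1) = d from by omega,
          show j + 1 + d - j = d + 1 from by omega]
        exact T_pascal d j
      exact_mod_cast congrArg (Nat.cast (R := ℚ)) this
    have hS2 : (S m (j + 1) : ℚ) = S m j + m.choose j + m.choose (j + 1) := by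
      have h1 : S m (j + 1) = S m j + (m + 1).choose (j + 1) := by
        rw [S_eq_T, S_eq_T, hd,
          show j + 1 + d - (j + 1) = d from by omega,
          show j + 1 + d - j = d + 1 from by omega,
          show j + 1 + d + 1 = d + j + 2 from by ring]
        exact T_diff d j
      have h2 : (m + 1).choose (j + 1) = m.choose j + m.choose (j + 1) :=
        Nat.choose_succ_succ m j
      rw [h1, h2]
      push_cast
      ring
    have hC : ((m + 1).choose (j + 1) : ℚ) = m.choose j + m.choose (j + 1) := by
      exact_mod_cast congrArg (Nat.cast (R := ℚ)) (Nat.choose_succ_succ m j)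
    have hrecQ : (SD (m + 1) (j + 1) : ℚ)
        = 2 ^ j * (j + 1) - 2 ^ (j + 1) + 1 + SD m (j + 1) + SD m j := by
      have := congrArg (Int.cast : ℤ → ℚ) hrec'
      push_cast at this
      simpa using this
    rw [hrecQ, IH1, IH2, hS2, hC, hS1, hS2]
    push_cast
    ring
end

section
/- In the half encoding of a comparator, hcomp(a,b,c,d) = (a → c) ∧ (b → c) ∧ (a ∧ b → d): if a single comparator receives exactly one input set to true (the other undefined), unit propagation sets the max output c to true and leaves d undefined; consequently, in any selection network with half-encoded comparators where k−1 inputs are set to true, unit propagation sets the outputs y_1,...,y_{k−1} to true. -/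
/-- Three-valued values for unit propagation: `some true` = 1 (true),
`none` = X (undefined). The max-output of a half-encoded comparator is set to
true by unit propagation iff one of the inputs is true. -/
def upMax (a b : Option Bool) : Option Bool :=
  if a = some true ∨ b = some true then some true else none

/-- The min-output of a half-encoded comparator is set to true by unit
propagation iff both inputs are true. -/
def upMin (a b : Option Bool) : Option Bool :=
  if a = some true ∧ b = some true then some true else none

/-- Apply one comparator on channels `p = (i, j)` (with `i < j`), using `mx`
for the upper and `mn` for the lower output. -/
def applyCmp {α : Type} (mx mn : α → α → α) (p : ℕ × ℕ) (v : ℕ → α) : ℕ → α :=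
  fun t => if t = p.1 then mx (v p.1) (v p.2)
    else if t = p.2 then mn (v p.1) (v p.2) else v t

/-- Run a comparator network given as a list of channel pairs. -/
def run {α : Type} (mx mn : α → α → α) (cs : List (ℕ × ℕ)) (v : ℕ → α) : ℕ → α :=
  cs.foldl (fun w p => applyCmp mx mn p w) v

/-- `cs` is a selection network of order `n` selecting `k` elements: every
comparator is within range, and on every input the first `k` outputs are the
`k` largest elements in nonincreasing order. -/
def IsSelectionNetwork (n k : ℕ) (cs : List (ℕ × ℕ)) : Prop :=
  (∀ p ∈ cs, p.1 < p.2 ∧ p.2 < n) ∧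
  ∀ x : ℕ → ℕ,
    (∀ p q, p ≤ q → q < k → run max min cs x q ≤ run max min cs x p) ∧
    (∀ p q, p < k → k ≤ q → q < n → run max min cs x q ≤ run max min cs x p)

def ee (x : Option Bool) : ℕ := if x = some true then 1 else 0

lemma ee_upMax (a b : Option Bool) : ee (upMax a b) = max (ee a) (ee b) := by
  unfold ee upMax
  by_cases ha : a = some true <;> by_cases hb : b = some true <;> simp [ha, hb]

lemma ee_upMin (a b : Option Bool) : ee (upMin a b) = min (ee a) (ee b) := by
  unfold ee upMin
  by_cases ha : a = some true <;> by_cases hb : b = some true <;> simp [ha, hb]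

lemma step_comm (p : ℕ × ℕ) (v : ℕ → Option Bool) :
    (fun t => ee (applyCmp upMax upMin p v t)) = applyCmp max min p (fun t => ee (v t)) := by
  funext t
  unfold applyCmp
  split_ifs <;> simp [ee_upMax, ee_upMin]

lemma run_comm (cs : List (ℕ × ℕ)) (v : ℕ → Option Bool) :
    (fun t => ee (run upMax upMin cs v t)) = run max min cs (fun t => ee (v t)) := by
  induction cs generalizing v with
  | nil => rfl
  | cons p cs ih =>
    show (fun t => ee (run upMax upMin cs (applyCmp upMax upMin p v) t))
        = run max min cs (applyCmp max min p (fun t => ee (v t)))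
    rw [ih, step_comm]

lemma sum_applyCmp (n : ℕ) (p : ℕ × ℕ) (hp : p.1 < p.2 ∧ p.2 < n) (w : ℕ → ℕ) :
    ∑ t ∈ Finset.range n, applyCmp max min p w t = ∑ t ∈ Finset.range n, w t := by
  obtain ⟨h12, h2n⟩ := hp
  have h1n : p.1 < n := lt_trans h12 h2n
  have hne : p.1 ≠ p.2 := Nat.ne_of_lt h12
  have h1 : p.1 ∈ Finset.range n := Finset.mem_range.mpr h1n
  have h2 : p.2 ∈ (Finset.range n).erase p.1 :=
    Finset.mem_erase.mpr ⟨(Ne.symm hne), Finset.mem_range.mpr h2n⟩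
  rw [← Finset.add_sum_erase _ _ h1, ← Finset.add_sum_erase _ _ h2,
      ← Finset.add_sum_erase _ w h1, ← Finset.add_sum_erase _ w h2]
  have hrest : ∀ t ∈ ((Finset.range n).erase p.1).erase p.2,
      applyCmp max min p w t = w t := by
    intro t ht
    have ht2 := (Finset.mem_erase.mp ht).1
    have ht1 := (Finset.mem_erase.mp (Finset.mem_erase.mp ht).2).1
    simp [applyCmp, ht1, ht2]
  rw [Finset.sum_congr rfl hrest]
  have e1 : applyCmp max min p w p.1 = max (w p.1) (w p.2) := by simp [applyCmp]
  have e2 : applyCmp max min p w p.2 = min (w p.1) (w p.2) := by simp [applyCmp, hne.symm]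
  rw [e1, e2, ← add_assoc, ← add_assoc, max_add_min]

lemma sum_run (n : ℕ) (cs : List (ℕ × ℕ)) (hcs : ∀ p ∈ cs, p.1 < p.2 ∧ p.2 < n)
    (w : ℕ → ℕ) :
    ∑ t ∈ Finset.range n, run max min cs w t = ∑ t ∈ Finset.range n, w t := by
  induction cs generalizing w with
  | nil => rfl
  | cons p cs ih =>
    have : ∑ t ∈ Finset.range n, run max min cs (applyCmp max min p w) t
        = ∑ t ∈ Finset.range n, applyCmp max min p w t :=
      ih (fun q hq => hcs q (List.mem_cons_of_mem _ hq)) _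
    calc ∑ t ∈ Finset.range n, run max min (p :: cs) w t
        = ∑ t ∈ Finset.range n, run max min cs (applyCmp max min p w) t := rfl
      _ = ∑ t ∈ Finset.range n, applyCmp max min p w t := this
      _ = ∑ t ∈ Finset.range n, w t := sum_applyCmp n p (hcs p List.mem_cons_self) w

lemma run_le_one (cs : List (ℕ × ℕ)) (w : ℕ → ℕ) (hw : ∀ t, w t ≤ 1) :
    ∀ t, run max min cs w t ≤ 1 := by
  induction cs generalizing w with
  | nil => exact hw
  | cons p cs ih =>
    exact ih _ (fun t => by
      unfold applyCmp
      dsimp only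
      split_ifs <;> simp [hw, max_le, min_le_of_left_le])

/-- Half encoding and unit propagation: a comparator receiving one true input
and one undefined input propagates true to the max output and leaves the min
output undefined; consequently, in any selection network whose comparators are
half-encoded, if `k − 1` inputs are set to true and the rest are undefined,
unit propagation sets the outputs `y_1, …, y_{k−1}` (indices `0, …, k−2`) to
true. -/
theorem up_forward_propagation (n k : ℕ) (hk : 1 ≤ k) (hkn : k ≤ n)
    (cs : List (ℕ × ℕ)) (hsel : IsSelectionNetwork n k cs)
    (v : ℕ → Option Bool)
    (hv : ∀ i, i < n → v i = some true ∨ v i = none)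
    (hcard : ((Finset.range n).filter (fun i => v i = some true)).card = k - 1) :
    (upMax (some true) none = some true ∧ upMin (some true) none = none) ∧
      ∀ i, i < k - 1 → run upMax upMin cs v i = some true := by
  refine ⟨⟨by simp [upMax], by simp [upMin]⟩, ?_⟩
  intro i hi
  set x : ℕ → ℕ := fun t => ee (v t) with hx
  have hx1 : ∀ t, x t ≤ 1 := fun t => by simp only [hx, ee]; split_ifs <;> simp
  have hsumx : ∑ t ∈ Finset.range n, x t = k - 1 := by
    rw [← hcard, Finset.card_filter]
    rfl
  set out := run max min cs x with hout
  have hsumout : ∑ t ∈ Finset.range n, out t = k - 1 := by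
    rw [hout, sum_run n cs hsel.1 x, hsumx]
  have hle1 : ∀ t, out t ≤ 1 := run_le_one cs x hx1
  have hik : i < k := lt_of_lt_of_le hi (Nat.sub_le k 1)
  -- show out i = 1
  have houti : out i = 1 := by
    by_contra h
    have h0 : out i = 0 := Nat.lt_one_iff.mp (lt_of_le_of_ne (hle1 i) h)
    have hzero : ∀ t, i ≤ t → t < n → out t = 0 := by
      intro t hit htn
      rcases lt_or_ge t k with htk | htk
      · have := (hsel.2 x).1 i t hit htk
        rw [← hout] at this
        omega
      · have := (hsel.2 x).2 i t hik htk htn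
        rw [← hout] at this
        omega
    have hsplit : ∑ t ∈ Finset.range n, out t
        = ∑ t ∈ Finset.range i, out t + ∑ t ∈ Finset.Ico i n, out t := by
      rw [Finset.range_eq_Ico, Finset.range_eq_Ico]
      exact (Finset.sum_Ico_consecutive (f := out) (Nat.zero_le i)
        (le_trans (le_of_lt hik) hkn)).symm
    have hzero2 : ∑ t ∈ Finset.Ico i n, out t = 0 :=
      Finset.sum_eq_zero (fun t ht => by
        have := Finset.mem_Ico.mp ht
        exact hzero t this.1 this.2)
    have hbound : ∑ t ∈ Finset.range i, out t ≤ i := by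
      calc ∑ t ∈ Finset.range i, out t ≤ ∑ t ∈ Finset.range i, 1 :=
            Finset.sum_le_sum (fun t _ => hle1 t)
        _ = i := by simp
    omega
  have := congrFun (run_comm cs v) i
  have hee : ee (run upMax upMin cs v i) = 1 := by
    rw [this]; exact houti
  unfold ee at hee
  by_cases hq : run upMax upMin cs v i = some true
  · exact hq
  · simp [hq] at hee
end
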